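/- Let G be a finite simple graph with at least two vertices and let S be a lexicographically optimal star partition of G with a designated center for each part. Suppose x is a leaf of a part A of S, y is the designated center of a different part B of S, and xy is an edge of G. Then |A| ≤ |B| + 1. -/
import Mathlib


/-- A star partition of `G`. -/
def IsStarPartition {V : Type*} [Fintype V] [DecidableEq V] (G : SimpleGraph V)
    (P : Finset (Finset V)) : Prop :=
  (∀ v : V, ∃! S : Finset V, S ∈ P ∧ v ∈ S) ∧
  (∀ S ∈ P, 2 ≤ S.card) ∧
  (∀ S ∈ P, ∃ c ∈ S, ∀ v ∈ S, v ≠ c → G.Adj c v)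

/-- A star partition of `G` together with a designated center for each part. -/
def IsCenteredStarPartition {V : Type*} [Fintype V] [DecidableEq V] (G : SimpleGraph V)
    (P : Finset (Finset V)) (center : Finset V → V) : Prop :=
  (∀ v : V, ∃! S : Finset V, S ∈ P ∧ v ∈ S) ∧
  (∀ S ∈ P, 2 ≤ S.card) ∧
  (∀ S ∈ P, center S ∈ S ∧ ∀ v ∈ S, v ≠ center S → G.Adj (center S) v)

/-- `starCounts P i` is the number of parts of `P` which are `i`-stars,
i.e. have exactly `i + 1` vertices. -/
def starCounts {V : Type*} [DecidableEq V] (P : Finset (Finset V)) : ℕ → ℕ :=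
  fun i => (P.filter (fun S => S.card = i + 1)).card

/-- Lexicographic comparison of star-count sequences, read from large star sizes
downwards (the counts vanish above `Δ(G)`, so this is the comparison of
`(s_Δ, s_{Δ-1}, …, s_1)`). -/
def LexLE (s t : ℕ → ℕ) : Prop :=
  s = t ∨ ∃ i : ℕ, s i < t i ∧ ∀ j : ℕ, i < j → s j = t j

private lemma count_insert {α : Type*} [DecidableEq α] (p : α → Prop) [DecidablePred p]
    (a : α) (s : Finset α) (h : a ∉ s) :
    (Finset.filter p (insert a s)).card
      = (if p a then 1 else 0) + (Finset.filter p s).card := by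
  rw [Finset.filter_insert]
  split
  · rw [Finset.card_insert_of_notMem (fun hm => h (Finset.mem_filter.1 hm).1)]
    omega
  · simp

/-- In a lexicographically optimal star partition, if `x` is a leaf of
a part `A` and `y` is the designated center of a different part `B` with `xy ∈ E(G)`,
then `|A| ≤ |B| + 1`. -/
theorem stmt10 {V : Type*} [Fintype V] [DecidableEq V] (G : SimpleGraph V)
    (h2 : 2 ≤ Fintype.card V)
    (P : Finset (Finset V)) (center : Finset V → V)
    (hP : IsCenteredStarPartition G P center)
    (hopt : ∀ Q : Finset (Finset V), IsStarPartition G Q →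
      LexLE (starCounts P) (starCounts Q))
    (A B : Finset V) (hA : A ∈ P) (hB : B ∈ P) (hAB : A ≠ B)
    (x : V) (hxA : x ∈ A) (hxleaf : x ≠ center A)
    (hxy : G.Adj x (center B)) :
    A.card ≤ B.card + 1 := by
  by_contra hcon
  push_neg at hcon
  obtain ⟨hcov, hcard, hcent⟩ := hP
  have hdisj : ∀ S ∈ P, ∀ T ∈ P, ∀ v : V, v ∈ S → v ∈ T → S = T := by
    intro S hS T hT v hvS hvT
    exact (hcov v).unique ⟨hS, hvS⟩ ⟨hT, hvT⟩
  have hyB : center B ∈ B := (hcent B hB).1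
  have hxB : x ∉ B := fun h => hAB (hdisj A hA B hB x hxA h)
  have hcA : center A ∈ A := (hcent A hA).1
  set A' := A.erase x with hA'def
  set B' := insert x B with hB'def
  have hcA' : center A ∈ A' := Finset.mem_erase.2 ⟨fun h => hxleaf h.symm, hcA⟩
  have hxA' : x ∉ A' := fun h => (Finset.mem_erase.1 h).1 rfl
  have hxB' : x ∈ B' := Finset.mem_insert_self x B
  have hA'card : A'.card + 1 = A.card := Finset.card_erase_add_one hxA
  have hB'card : B'.card = B.card + 1 := Finset.card_insert_of_notMem hxB
  have hBcard : 2 ≤ B.card := hcard B hB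
  have hA'sub : A' ⊆ A := Finset.erase_subset x A
  have hA'P : A' ∉ P := by
    intro h
    have heq : A' = A := hdisj A' h A hA (center A) hcA' hcA
    rw [heq] at hxA'
    exact hxA' hxA
  have hB'P : B' ∉ P := by
    intro h
    have heq : B' = B := hdisj B' h B hB (center B) (Finset.mem_insert_of_mem hyB) hyB
    rw [heq] at hxB'
    exact hxB hxB'
  have hA'B' : A' ≠ B' := fun h => hxA' (h ▸ hxB')
  set Q0 := (P.erase A).erase B with hQ0def
  have hQ0 : ∀ S ∈ Q0, S ∈ P ∧ S ≠ A ∧ S ≠ B := by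
    intro S hS
    have h1 := Finset.mem_erase.1 hS
    have h2 := Finset.mem_erase.1 h1.2
    exact ⟨h2.2, h2.1, h1.1⟩
  set Q : Finset (Finset V) := insert A' (insert B' Q0) with hQdef
  have hA'Q : A' ∈ Q := Finset.mem_insert_self _ _
  have hB'Q : B' ∈ Q := Finset.mem_insert_of_mem (Finset.mem_insert_self _ _)
  have hQmem : ∀ S ∈ Q, S = A' ∨ S = B' ∨ S ∈ Q0 := by
    intro S hS
    rcases Finset.mem_insert.1 hS with h | h
    · exact Or.inl h
    · rcases Finset.mem_insert.1 h with h | h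
      · exact Or.inr (Or.inl h)
      · exact Or.inr (Or.inr h)
  -- no vertex of A' lies in a Q0-part, etc.
  have hA'Q0 : ∀ S ∈ Q0, ∀ v, v ∈ A' → v ∉ S := by
    intro S hS v hvA' hvS
    obtain ⟨hSP, hSA, _⟩ := hQ0 S hS
    exact hSA (hdisj S hSP A hA v hvS (hA'sub hvA'))
  have hB'Q0 : ∀ S ∈ Q0, ∀ v, v ∈ B' → v ∉ S := by
    intro S hS v hvB' hvS
    obtain ⟨hSP, hSA, hSB⟩ := hQ0 S hS
    rcases Finset.mem_insert.1 hvB' with rfl | hvB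
    · exact hSA (hdisj S hSP A hA v hvS hxA)
    · exact hSB (hdisj S hSP B hB v hvS hvB)
  have hA'B'disj : ∀ v, v ∈ A' → v ∉ B' := by
    intro v hvA' hvB'
    rcases Finset.mem_insert.1 hvB' with rfl | hvB
    · exact hxA' hvA'
    · exact hAB (hdisj A hA B hB v (hA'sub hvA') hvB)
  have hQdisj : ∀ S ∈ Q, ∀ T ∈ Q, ∀ v : V, v ∈ S → v ∈ T → S = T := by
    intro S hS T hT v hvS hvT
    rcases hQmem S hS with rfl | rfl | hS0 <;> rcases hQmem T hT with rfl | rfl | hT0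
    · rfl
    · exact absurd hvT (hA'B'disj v hvS)
    · exact absurd hvT (hA'Q0 T hT0 v hvS)
    · exact absurd hvS (hA'B'disj v hvT)
    · rfl
    · exact absurd hvT (hB'Q0 T hT0 v hvS)
    · exact absurd hvS (hA'Q0 S hS0 v hvT)
    · exact absurd hvS (hB'Q0 S hS0 v hvT)
    · exact hdisj S (hQ0 S hS0).1 T (hQ0 T hT0).1 v hvS hvT
  have hQstar : IsStarPartition G Q := by
    refine ⟨?_, ?_, ?_⟩
    · intro v
      have hex : ∃ S, S ∈ Q ∧ v ∈ S := by
        by_cases hvA : v ∈ A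
        · by_cases hvx : v = x
          · exact ⟨B', hB'Q, hvx ▸ hxB'⟩
          · exact ⟨A', hA'Q, Finset.mem_erase.2 ⟨hvx, hvA⟩⟩
        · by_cases hvB : v ∈ B
          · exact ⟨B', hB'Q, Finset.mem_insert_of_mem hvB⟩
          · obtain ⟨S, ⟨hSP, hvS⟩, _⟩ := hcov v
            have hSA : S ≠ A := fun h => hvA (h ▸ hvS)
            have hSB : S ≠ B := fun h => hvB (h ▸ hvS)
            refine ⟨S, ?_, hvS⟩
            exact Finset.mem_insert_of_mem (Finset.mem_insert_of_mem
              (Finset.mem_erase.2 ⟨hSB, Finset.mem_erase.2 ⟨hSA, hSP⟩⟩))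
      obtain ⟨S, hSQ, hvS⟩ := hex
      exact ⟨S, ⟨hSQ, hvS⟩, fun T hT => hQdisj T hT.1 S hSQ v hT.2 hvS⟩
    · intro S hS
      rcases hQmem S hS with rfl | rfl | hS0
      · omega
      · omega
      · exact hcard S (hQ0 S hS0).1
    · intro S hS
      rcases hQmem S hS with rfl | rfl | hS0
      · exact ⟨center A, hcA', fun v hv hne => (hcent A hA).2 v (hA'sub hv) hne⟩
      · refine ⟨center B, Finset.mem_insert_of_mem hyB, ?_⟩
        intro v hv hne
        rcases Finset.mem_insert.1 hv with rfl | hvB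
        · exact hxy.symm
        · exact (hcent B hB).2 v hvB hne
      · obtain ⟨hSP, _, _⟩ := hQ0 S hS0
        exact ⟨center S, (hcent S hSP).1, (hcent S hSP).2⟩
  -- counting
  have hB'nQ0 : B' ∉ Q0 := fun h => hB'P (hQ0 B' h).1
  have hA'nQ0 : A' ∉ insert B' Q0 := by
    intro h
    rcases Finset.mem_insert.1 h with h | h
    · exact hA'B' h
    · exact hA'P (hQ0 A' h).1
  have hBmem : B ∈ P.erase A := Finset.mem_erase.2 ⟨fun h => hAB h.symm, hB⟩
  have hBnQ0 : B ∉ Q0 := fun h => (hQ0 B h).2.2 rfl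
  have hAn : A ∉ insert B Q0 := by
    intro h
    rcases Finset.mem_insert.1 h with h | h
    · exact hAB h
    · exact (hQ0 A h).2.1 rfl
  have hPeq : P = insert A (insert B Q0) := by
    rw [hQ0def, Finset.insert_erase hBmem, Finset.insert_erase hA]
  have hPcount : ∀ j, starCounts P j
      = (if A.card = j + 1 then 1 else 0) + ((if B.card = j + 1 then 1 else 0)
        + starCounts Q0 j) := by
    intro j
    rw [starCounts, hPeq, count_insert _ _ _ hAn, count_insert _ _ _ hBnQ0]
    rfl
  have hQcount : ∀ j, starCounts Q j
      = (if A'.card = j + 1 then 1 else 0) + ((if B'.card = j + 1 then 1 else 0)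
        + starCounts Q0 j) := by
    intro j
    rw [starCounts, hQdef, count_insert _ _ _ hA'nQ0, count_insert _ _ _ hB'nQ0]
    rfl
  set i0 := A.card - 1 with hi0
  have hkey1 : starCounts Q i0 < starCounts P i0 := by
    rw [hPcount, hQcount]
    rw [if_pos (by omega : A.card = i0 + 1), if_neg (by omega : ¬ B.card = i0 + 1),
      if_neg (by omega : ¬ A'.card = i0 + 1), if_neg (by omega : ¬ B'.card = i0 + 1)]
    omega
  have hkey2 : ∀ j, i0 < j → starCounts Q j = starCounts P j := by
    intro j hj
    rw [hPcount, hQcount]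
    rw [if_neg (by omega : ¬ A.card = j + 1), if_neg (by omega : ¬ B.card = j + 1),
      if_neg (by omega : ¬ A'.card = j + 1), if_neg (by omega : ¬ B'.card = j + 1)]
  rcases hopt Q hQstar with heq | ⟨i, hi, hj⟩
  · have := congrFun heq i0
    omega
  · rcases lt_trichotomy i i0 with h | rfl | h
    · have := hj i0 h
      omega
    · omega
    · have := hkey2 i h
      omega
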